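/- Let (Φ, Ψ) be a complementary pair of continuous strictly increasing Young functions, suppose Ψ̃(x) := Ψ(√x) is a Young function, and let Φ̃ be the complementary Young function of Ψ̃. Then for every x > 0: Φ(x) ≤ Φ̃(2x²/Φ(x)) and Φ̃(x²/(4Φ(x))) ≤ Φ(x). -/

import Mathlib

/-- If `(Φ, Ψ)` is a complementary pair of continuous strictly increasing
Young functions, `Ψ̃ x = Ψ (√x)` is a Young function and `Φ̃` is its complementary
Young function, then `Φ x ≤ Φ̃ (2x²/Φ x)` and `Φ̃ (x²/(4 Φ x)) ≤ Φ x` for all `x > 0`. -/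
theorem young_square_root_comparison
    (Φ Ψ Ψt Φt : ℝ → ℝ)
    (hΦ0 : Φ 0 = 0)
    (hΦconv : ConvexOn ℝ (Set.Ici 0) Φ)
    (hΦtop : Filter.Tendsto Φ Filter.atTop Filter.atTop)
    (hΦcont : ContinuousOn Φ (Set.Ici 0))
    (hΦmono : StrictMonoOn Φ (Set.Ici 0))
    (hΨcont : ContinuousOn Ψ (Set.Ici 0))
    (hΨmono : StrictMonoOn Ψ (Set.Ici 0))
    (hΦpos : ∀ x > (0:ℝ), 0 < Φ x)
    (hΨpos : ∀ x > (0:ℝ), 0 < Ψ x)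
    (hcompl : ∀ y ≥ (0:ℝ), IsLUB {z : ℝ | ∃ x ≥ (0:ℝ), z = x * y - Φ x} (Ψ y))
    (hΨt : ∀ x ≥ (0:ℝ), Ψt x = Ψ (Real.sqrt x))
    (hΨtconv : ConvexOn ℝ (Set.Ici 0) Ψt)
    (hΦt : ∀ y ≥ (0:ℝ), IsLUB {z : ℝ | ∃ x ≥ (0:ℝ), z = x * y - Ψt x} (Φt y)) :
    ∀ x > (0:ℝ), Φ x ≤ Φt (2 * x ^ 2 / Φ x) ∧ Φt (x ^ 2 / (4 * Φ x)) ≤ Φ x := by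
  -- Φ is nonnegative on [0, ∞)
  have hΦnn : ∀ a : ℝ, 0 ≤ a → 0 ≤ Φ a := by
    intro a ha
    rcases eq_or_lt_of_le ha with h | h
    · rw [← h, hΦ0]
    · exact (hΦpos a h).le
  -- Young's inequality (lower bound for Ψ)
  have hΨlb : ∀ y : ℝ, 0 ≤ y → ∀ a : ℝ, 0 ≤ a → a * y - Φ a ≤ Ψ y := by
    intro y hy a ha
    exact (hcompl y hy).1 ⟨a, ha, rfl⟩
  have hΨnn : ∀ y : ℝ, 0 ≤ y → 0 ≤ Ψ y := by
    intro y hy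
    have := hΨlb y hy 0 le_rfl
    simpa [hΦ0] using this
  have hΨ0 : Ψ 0 = 0 := by
    refine (hcompl 0 le_rfl).unique ⟨?_, ?_⟩
    · rintro z ⟨a, ha, rfl⟩
      simpa using hΦnn a ha
    · intro b hb
      exact hb ⟨0, le_rfl, by simp [hΦ0]⟩
  have hΨt0 : Ψt 0 = 0 := by
    rw [hΨt 0 le_rfl, Real.sqrt_zero, hΨ0]
  -- convexity lower bound for Ψt : Ψt t₀ ≤ (t₀/t) Ψt t for 0 < t₀ ≤ t
  have hconv : ∀ t₀ t : ℝ, 0 < t₀ → t₀ ≤ t → Ψt t₀ ≤ (t₀ / t) * Ψt t := by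
    intro t₀ t ht₀ ht
    have htpos : 0 < t := lt_of_lt_of_le ht₀ ht
    have hl1 : t₀ / t ≤ 1 := div_le_one_of_le₀ ht htpos.le
    have hl0 : 0 ≤ t₀ / t := div_nonneg ht₀.le htpos.le
    have h := hΨtconv.2 (Set.mem_Ici.mpr le_rfl) (Set.mem_Ici.mpr htpos.le)
      (by linarith : (0:ℝ) ≤ 1 - t₀ / t) hl0 (by ring)
    have heq : (1 - t₀ / t) • (0:ℝ) + (t₀ / t) • t = t₀ := by
      field_simp
      rw [smul_zero, zero_add, smul_eq_mul, div_mul_cancel₀ _ htpos.ne']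
    rw [heq] at h
    simp only [smul_eq_mul] at h
    rw [hΨt0] at h
    linarith
  intro x hx
  have hΦx := hΦpos x hx
  have hq : 0 ≤ Φ x / x := div_nonneg hΦx.le hx.le
  -- the standard fact : Ψ (Φ x / x) ≤ Φ x
  have hkey : Ψ (Φ x / x) ≤ Φ x := by
    refine (hcompl _ hq).2 ?_
    rintro z ⟨a, ha, rfl⟩
    rcases le_or_gt a x with h | h
    · have h1 : a * (Φ x / x) ≤ Φ x := by
        rw [mul_div_assoc', div_le_iff₀ hx]
        nlinarith
      nlinarith [hΦnn a ha]
    · have hapos : 0 < a := hx.trans h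
      have hcv := hΦconv.2 (Set.mem_Ici.mpr le_rfl) (Set.mem_Ici.mpr ha)
        (show 0 ≤ 1 - x / a by
          have : x / a ≤ 1 := div_le_one_of_le₀ h.le hapos.le
          linarith)
        (show 0 ≤ x / a by positivity) (by ring)
      have heq : (1 - x / a) • (0:ℝ) + (x / a) • a = x := by field_simp; rw [smul_zero, zero_add, smul_eq_mul, div_mul_cancel₀ _ hapos.ne']
      rw [heq] at hcv
      simp only [smul_eq_mul] at hcv
      rw [hΦ0] at hcv
      -- hcv : Φ x ≤ (1 - x/a) * 0 + (x/a) * Φ a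
      have h2 : a * Φ x ≤ x * Φ a := by
        have h3 : Φ x ≤ x / a * Φ a := by linarith
        rw [div_mul_eq_mul_div, le_div_iff₀ hapos] at h3
        linarith
      have h4 : a * (Φ x / x) ≤ Φ a := by
        rw [mul_div_assoc', div_le_iff₀ hx]
        linarith
      linarith
  constructor
  · -- Φ x ≤ Φt (2x²/Φx)
    have hy0 : (0:ℝ) ≤ 2 * x ^ 2 / Φ x := by positivity
    have h1 := (hΦt _ hy0).1 ⟨(Φ x / x) ^ 2, sq_nonneg _, rfl⟩
    have h2 : Ψt ((Φ x / x) ^ 2) = Ψ (Φ x / x) := by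
      rw [hΨt _ (sq_nonneg _), Real.sqrt_sq hq]
    have h3 : (Φ x / x) ^ 2 * (2 * x ^ 2 / Φ x) = 2 * Φ x := by
      field_simp
    rw [h2, h3] at h1
    linarith
  · -- Φt (x²/(4Φx)) ≤ Φ x
    have hy0 : (0:ℝ) ≤ x ^ 2 / (4 * Φ x) := by positivity
    refine (hΦt _ hy0).2 ?_
    rintro z ⟨t, ht, rfl⟩
    set s := Real.sqrt t with hs
    have hs0 : 0 ≤ s := Real.sqrt_nonneg t
    have hts : t = s ^ 2 := (Real.sq_sqrt ht).symm
    have hΨts : Ψt t = Ψ s := hΨt t ht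
    have hΨtnn : 0 ≤ Ψt t := by rw [hΨts]; exact hΨnn s hs0
    rcases le_or_gt (s * x) (2 * Φ x) with h | h
    · have h1 : t * (x ^ 2 / (4 * Φ x)) ≤ Φ x := by
        rw [hts, mul_div_assoc', div_le_iff₀ (by positivity : (0:ℝ) < 4 * Φ x)]
        nlinarith [mul_le_mul h h (mul_nonneg hs0 hx.le) (by positivity : (0:ℝ) ≤ 2 * Φ x)]
      linarith
    · set t₀ := (2 * Φ x / x) ^ 2 with ht₀def
      have ht₀pos : 0 < t₀ := by positivity
      have hsx : 2 * Φ x / x < s := by rw [div_lt_iff₀ hx]; linarith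
      have htt₀ : t₀ ≤ t := by
        rw [hts, ht₀def]
        have h0 : 0 ≤ 2 * Φ x / x := by positivity
        nlinarith
      have hc := hconv t₀ t ht₀pos htt₀
      have hΨt₀ : Φ x ≤ Ψt t₀ := by
        rw [ht₀def, hΨt _ (sq_nonneg _), Real.sqrt_sq (by positivity)]
        have h5 := hΨlb (2 * Φ x / x) (by positivity) x hx.le
        have hxx : x * (2 * Φ x / x) = 2 * Φ x := by field_simp
        rw [hxx] at h5
        linarith
      have htpos : 0 < t := lt_of_lt_of_le ht₀pos htt₀
      have h5 : Φ x ≤ t₀ / t * Ψt t := hΨt₀.trans hc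
      have h5' : Φ x * t ≤ t₀ * Ψt t := by
        rw [div_mul_eq_mul_div, le_div_iff₀ htpos] at h5
        linarith
      have ht₀eq : t₀ * x ^ 2 = 4 * Φ x ^ 2 := by
        rw [ht₀def]; field_simp; ring
      -- from Φx·t ≤ t₀·Ψt t and t₀x² = 4Φx², get t·x² ≤ 4Φx·Ψt t
      have h6 : t * (x ^ 2 / (4 * Φ x)) ≤ Ψt t := by
        rw [mul_div_assoc', div_le_iff₀ (by positivity : (0:ℝ) < 4 * Φ x)]
        nlinarith [mul_le_mul_of_nonneg_right h5' (sq_nonneg x)]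
      linarith
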